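/- arXiv:1406.2111 — 2 statements merged into one kernel-verified Lean document; each statement's English description precedes it below -/
import Mathlib

section
/- Let G be a 3-colorable good graph with a fixed vertex v0 and associated partition V(G) = T_G ∪ M_G ∪ B_G, let e ∈ BAD_G be a non-edge of G, and let G' = G ∪ {e}, where G' is 3-colorable. Then B_{G'} = B_G (and consequently T_{G'} = T_G and M_{G'} = M_G). -/
open SimpleGraph

/-- The graph obtained from `G` by adding the edge `e`. -/
def addEdge {V : Type*} (G : SimpleGraph V) (e : Sym2 V) : SimpleGraph V :=
  G ⊔ SimpleGraph.fromEdgeSet {e}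

/-- Top vertices: the vertices receiving the same color as `v0` in every proper
3-coloring of `G`. -/
def topSet {V : Type*} (G : SimpleGraph V) (v0 : V) : Set V :=
  {x | ∀ c : G.Coloring (Fin 3), c x = c v0}

/-- Middle vertices: the vertices outside the top having a neighbor in the top. -/
def midSet {V : Type*} (G : SimpleGraph V) (v0 : V) : Set V :=
  {x | x ∉ topSet G v0 ∧ ∃ t ∈ topSet G v0, G.Adj x t}

/-- Bottom vertices: all remaining vertices. -/
def botVertSet {V : Type*} (G : SimpleGraph V) (v0 : V) : Set V :=
  {x | x ∉ topSet G v0 ∧ x ∉ midSet G v0}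

/-- The vertex set of `Γ_G(u)`, the connected component of `u` in the subgraph of `G`
induced on `{u} ∪ M_G`: all vertices reachable from `u` by a walk staying inside
`{u} ∪ M_G`. -/
def gammaSet {V : Type*} (G : SimpleGraph V) (v0 u : V) : Set V :=
  {w | ∃ p : G.Walk u w, ∀ z ∈ p.support, z ∈ insert u (midSet G v0)}

/-- `m` and `m'` lie in the same middle-component of `G` (a connected component of the
subgraph induced on `M_G`): they are joined by a walk staying inside `M_G`. -/
def midReach {V : Type*} (G : SimpleGraph V) (v0 : V) (m m' : V) : Prop :=
  ∃ p : G.Walk m m', ∀ z ∈ p.support, z ∈ midSet G v0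

/-- Property (P1): the bottom `B_G` is an independent set in `G`. -/
def prop1 {V : Type*} (G : SimpleGraph V) (v0 : V) : Prop :=
  ∀ u ∈ botVertSet G v0, ∀ v ∈ botVertSet G v0, ¬ G.Adj u v

/-- Property (P2): every middle-component of `G` has at most one attached bottom
vertex. -/
def prop2 {V : Type*} (G : SimpleGraph V) (v0 : V) : Prop :=
  ∀ u v m m' : V, u ∈ botVertSet G v0 → v ∈ botVertSet G v0 →
    m ∈ midSet G v0 → m' ∈ midSet G v0 →
    G.Adj u m → G.Adj v m' → midReach G v0 m m' → u = v

/-- `G` is good: it satisfies properties (P1) and (P2). -/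
def goodGraph {V : Type*} (G : SimpleGraph V) (v0 : V) : Prop :=
  prop1 G v0 ∧ prop2 G v0

/-- The bad pairs `BAD_G`: the pairs `uv` such that there exist distinct bottom vertices
`x ≠ y` with `u ∈ V(Γ_G(x))` and `v ∈ V(Γ_G(y))`. -/
def badPair {V : Type*} (G : SimpleGraph V) (v0 : V) (e : Sym2 V) : Prop :=
  ∃ u v x y : V, e = s(u, v) ∧ x ∈ botVertSet G v0 ∧ y ∈ botVertSet G v0 ∧ x ≠ y ∧
    u ∈ gammaSet G v0 x ∧ v ∈ gammaSet G v0 y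

/-- `G` is almost good: `G` is good, or some edge can be removed from `G` so that the
resulting graph is good. -/
def almostGood {V : Type*} (G : SimpleGraph V) (v0 : V) : Prop :=
  goodGraph G v0 ∨ ∃ e ∈ G.edgeSet, goodGraph (G.deleteEdges {e}) v0

section helpers
variable {V : Type*} {G : SimpleGraph V} {v0 : V}

lemma v0_mem_top : v0 ∈ topSet G v0 := fun _ => rfl

lemma mid_ne_v0 {m : V} (hm : m ∈ midSet G v0) (c : G.Coloring (Fin 3)) : c m ≠ c v0 := by
  obtain ⟨-, t, ht, hadj⟩ := hm
  have h := c.valid hadj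
  rwa [ht c] at h

lemma bot_adj_mid (h1 : prop1 G v0) {b w : V} (hb : b ∈ botVertSet G v0) (hadj : G.Adj b w) :
    w ∈ midSet G v0 := by
  have hwt : w ∉ topSet G v0 := fun hw => hb.2 ⟨hb.1, w, hw, hadj⟩
  by_contra hwm
  exact h1 b hb w ⟨hwt, hwm⟩ hadj

lemma gamma_mem_self {b : V} : b ∈ gammaSet G v0 b :=
  ⟨Walk.nil, by simp⟩

lemma gamma_mem_cases {b w : V} (hw : w ∈ gammaSet G v0 b) : w = b ∨ w ∈ midSet G v0 := by
  obtain ⟨p, hp⟩ := hw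
  have := hp w p.end_mem_support
  rcases this with h | h
  · exact Or.inl h
  · exact Or.inr h

lemma gamma_attach_aux {b : V} (hb : b ∈ botVertSet G v0) :
    ∀ (n : ℕ) (w : V) (p : G.Walk b w), p.length ≤ n →
      (∀ z ∈ p.support, z ∈ insert b (midSet G v0)) → w ≠ b →
      ∃ m ∈ midSet G v0, G.Adj b m ∧ midReach G v0 m w := by
  classical
  intro n
  induction n with
  | zero =>
    intro w p hl hsupp hw
    cases p with
    | nil => exact absurd rfl hw
    | cons h q => simp [Walk.length_cons] at hl
  | succ n ih =>
    intro w p hl hsupp hw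
    cases p with
    | nil => exact absurd rfl hw
    | @cons _ y _ h q =>
      by_cases hbq : b ∈ q.support
      · refine ih w (q.dropUntil b hbq) ?_ ?_ hw
        · have : q.length ≤ n := by
            rw [Walk.length_cons] at hl; omega
          exact le_trans (Walk.length_dropUntil_le q hbq) this
        · intro z hz
          have hz' : z ∈ q.support := Walk.support_dropUntil_subset q hbq hz
          exact hsupp z (by rw [Walk.support_cons]; exact List.mem_cons_of_mem _ hz')
      · have hy : y ∈ midSet G v0 := by
          have h1 := hsupp y (by rw [Walk.support_cons]; exact List.mem_cons_of_mem _ q.start_mem_support)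
          rcases h1 with h1 | h1
          · exact absurd (h1 ▸ q.start_mem_support) hbq
          · exact h1
        refine ⟨y, hy, h, q, fun z hz => ?_⟩
        have h1 := hsupp z (by rw [Walk.support_cons]; exact List.mem_cons_of_mem _ hz)
        rcases h1 with h1 | h1
        · exact absurd (h1 ▸ hz) hbq
        · exact h1

lemma gamma_attach {b w : V} (hb : b ∈ botVertSet G v0) (hw : w ∈ gammaSet G v0 b) (hwb : w ≠ b) :
    ∃ m ∈ midSet G v0, G.Adj b m ∧ midReach G v0 m w := by
  obtain ⟨p, hp⟩ := hw
  exact gamma_attach_aux hb p.length w p le_rfl hp hwb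

lemma gamma_disjoint (h2 : prop2 G v0) {a b : V} (ha : a ∈ botVertSet G v0) (hb : b ∈ botVertSet G v0)
    (hab : a ≠ b) (w : V) (hwa : w ∈ gammaSet G v0 a) (hwb : w ∈ gammaSet G v0 b) : False := by
  rcases gamma_mem_cases hwa with rfl | hma
  · rcases gamma_mem_cases hwb with h | h
    · exact hab h
    · exact ha.2 h
  · have hwa' : w ≠ a := fun h => ha.2 (h ▸ hma)
    have hwb' : w ≠ b := fun h => hb.2 (h ▸ hma)
    obtain ⟨m, hm, ham, pm⟩ := gamma_attach ha hwa hwa'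
    obtain ⟨m', hm', hbm', pm'⟩ := gamma_attach hb hwb hwb'
    obtain ⟨p, hp⟩ := pm
    obtain ⟨q, hq⟩ := pm'
    have hreach : midReach G v0 m m' := by
      refine ⟨p.append q.reverse, fun z hz => ?_⟩
      rw [Walk.mem_support_append_iff] at hz
      rcases hz with h | h
      · exact hp z h
      · exact hq z (by rwa [Walk.support_reverse, List.mem_reverse] at h)
    exact hab (h2 a b m m' ha hb hm hm' ham hbm' hreach)

lemma gamma_boundary (h1 : prop1 G v0) (h2 : prop2 G v0) {b p q : V} (hb : b ∈ botVertSet G v0)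
    (hp : p ∈ gammaSet G v0 b) (hadj : G.Adj p q) (hq : q ∉ topSet G v0) :
    q ∈ gammaSet G v0 b := by
  rcases gamma_mem_cases hp with rfl | hpm
  · have hqm : q ∈ midSet G v0 := bot_adj_mid h1 hb hadj
    refine ⟨Walk.cons hadj Walk.nil, fun z hz => ?_⟩
    simp only [Walk.support_cons, Walk.support_nil, List.mem_cons, List.mem_singleton] at hz
    rcases hz with rfl | hz
    · exact Set.mem_insert _ _
    · simp only [List.mem_singleton, List.not_mem_nil, or_false] at hz
      exact hz ▸ Set.mem_insert_of_mem _ hqm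
  · by_cases hqm : q ∈ midSet G v0
    · obtain ⟨pw, hpw⟩ := hp
      refine ⟨pw.append (Walk.cons hadj Walk.nil), fun z hz => ?_⟩
      rw [Walk.mem_support_append_iff] at hz
      rcases hz with h | h
      · exact hpw z h
      · simp only [Walk.support_cons, Walk.support_nil, List.mem_cons, List.mem_singleton,
          List.not_mem_nil, or_false] at h
        rcases h with rfl | rfl
        · exact Set.mem_insert_of_mem _ hpm
        · exact Set.mem_insert_of_mem _ hqm
    · have hqb : q ∈ botVertSet G v0 := ⟨hq, hqm⟩
      have hpb : p ≠ b := fun h => hb.2 (h ▸ hpm)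
      obtain ⟨m, hm, hbm, hreach⟩ := gamma_attach hb hp hpb
      have heq : b = q := h2 b q m p hb hqb hm hpm hbm hadj.symm hreach
      exact heq ▸ gamma_mem_self

end helpers

lemma permLemma : ∀ p q r s : Fin 3, p ≠ q → ∃ π : Equiv.Perm (Fin 3), π p = r ∧ π q ≠ s := by
  decide

section key
variable {V : Type*} {G : SimpleGraph V} {v0 : V}

lemma key_lemma (hgood : goodGraph G v0) {u v a b : V} (x : V)
    (ha : a ∈ botVertSet G v0) (hb : b ∈ botVertSet G v0) (hab : a ≠ b)
    (hu : u ∈ gammaSet G v0 a) (hv : v ∈ gammaSet G v0 b)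
    (hx : x ∉ gammaSet G v0 b)
    (hxT : x ∈ topSet (addEdge G s(u, v)) v0)
    (c : G.Coloring (Fin 3)) : c x = c v0 := by
  classical
  obtain ⟨h1, h2⟩ := hgood
  -- a coloring giving v a color different from v0's
  obtain ⟨d, hd⟩ : ∃ d : G.Coloring (Fin 3), d v ≠ d v0 := by
    rcases gamma_mem_cases hv with rfl | hm
    · have hvt : v ∉ topSet G v0 := hb.1
      simp only [topSet, Set.mem_setOf_eq, not_forall] at hvt
      exact hvt
    · exact ⟨c, mid_ne_v0 hm c⟩
  obtain ⟨π, hπ1, hπ2⟩ : ∃ π : Equiv.Perm (Fin 3), π (d v0) = c v0 ∧ π (d v) ≠ c u :=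
    permLemma (d v0) (d v) (c v0) (c u) (Ne.symm hd)
  set S := gammaSet G v0 b with hS
  have huS : u ∉ S := fun h => gamma_disjoint h2 ha hb hab u hu h
  have hv0S : v0 ∉ S := by
    intro h
    rcases gamma_mem_cases h with rfl | hm
    · exact hb.1 v0_mem_top
    · exact hm.1 v0_mem_top
  set f : V → Fin 3 := fun w => if w ∈ S then π (d w) else c w with hf
  have hvalid : ∀ {p q : V}, (addEdge G s(u, v)).Adj p q → f p ≠ f q := by
    intro p q hpq
    rw [addEdge, sup_adj] at hpq
    rcases hpq with hG | hE
    · by_cases hp : p ∈ S <;> by_cases hq : q ∈ S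
      · simp only [hf, if_pos hp, if_pos hq]
        exact fun h => d.valid hG (π.injective h)
      · have hqt : q ∈ topSet G v0 := by
          by_contra h
          exact hq (gamma_boundary h1 h2 hb hp hG h)
        rcases gamma_mem_cases hp with rfl | hpm
        · exact absurd (⟨hb.1, q, hqt, hG⟩ : p ∈ midSet G v0) hb.2
        · simp only [hf, if_pos hp, if_neg hq]
          have : d p ≠ d v0 := mid_ne_v0 hpm d
          have h3 : π (d p) ≠ c v0 := fun h => this (π.injective (h.trans hπ1.symm))
          rw [hqt c]
          exact h3
      · have hpt : p ∈ topSet G v0 := by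
          by_contra h
          exact hp (gamma_boundary h1 h2 hb hq hG.symm h)
        rcases gamma_mem_cases hq with rfl | hqm
        · exact absurd (⟨hb.1, p, hpt, hG.symm⟩ : q ∈ midSet G v0) hb.2
        · simp only [hf, if_neg hp, if_pos hq]
          have : d q ≠ d v0 := mid_ne_v0 hqm d
          have h3 : π (d q) ≠ c v0 := fun h => this (π.injective (h.trans hπ1.symm))
          rw [hpt c]
          exact fun h => h3 h.symm
      · simp only [hf, if_neg hp, if_neg hq]
        exact c.valid hG
    · rw [fromEdgeSet_adj, Set.mem_singleton_iff, Sym2.eq_iff] at hE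
      have key : f u ≠ f v := by
        simp only [hf, if_neg huS, if_pos hv]
        exact fun h => hπ2 h.symm
      rcases hE.1 with ⟨rfl, rfl⟩ | ⟨rfl, rfl⟩
      · exact key
      · exact key.symm
  have hx' : f x = f v0 := hxT (SimpleGraph.Coloring.mk f hvalid)
  simp only [hf, if_neg hx, if_neg hv0S] at hx'
  exact hx'

end key

/-- If `G` is a good 3-colorable graph, `e ∈ BAD_G` is a non-edge of `G`, and
`G' = G ∪ {e}` is 3-colorable, then `B_{G'} = B_G` (and consequently `T_{G'} = T_G`
and `M_{G'} = M_G`). -/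
theorem statement_14 {V : Type*} (G : SimpleGraph V) (v0 : V)
    (hcol : G.Colorable 3) (hgood : goodGraph G v0)
    (e : Sym2 V) (hd : ¬ e.IsDiag) (hne : e ∉ G.edgeSet) (hbad : badPair G v0 e)
    (hcol' : (addEdge G e).Colorable 3) :
    botVertSet (addEdge G e) v0 = botVertSet G v0 ∧
    topSet (addEdge G e) v0 = topSet G v0 ∧
    midSet (addEdge G e) v0 = midSet G v0 := by
  obtain ⟨u, v, a, b, he, ha, hb, hab, hu, hv⟩ := hbad
  have hle : G ≤ addEdge G e := le_sup_left
  have htop : topSet (addEdge G e) v0 = topSet G v0 := by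
    apply Set.Subset.antisymm
    · intro x hx c
      subst he
      by_cases hxb : x ∈ gammaSet G v0 b
      · have hxa : x ∉ gammaSet G v0 a := fun h => gamma_disjoint hgood.2 ha hb hab x h hxb
        have hxT : x ∈ topSet (addEdge G s(v, u)) v0 := by rwa [Sym2.eq_swap]
        exact key_lemma hgood x hb ha (Ne.symm hab) hv hu hxa hxT c
      · exact key_lemma hgood x ha hb hab hu hv hxb hx c
    · intro x hx c'
      exact hx (c'.comp (SimpleGraph.Hom.ofLE hle))
  have hnotopu : u ∉ topSet G v0 := by
    rcases gamma_mem_cases hu with rfl | hm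
    · exact ha.1
    · exact hm.1
  have hnotopv : v ∉ topSet G v0 := by
    rcases gamma_mem_cases hv with rfl | hm
    · exact hb.1
    · exact hm.1
  have hmid : midSet (addEdge G e) v0 = midSet G v0 := by
    ext w
    simp only [midSet, Set.mem_setOf_eq, htop]
    constructor
    · rintro ⟨hwt, t, ht, hadj⟩
      refine ⟨hwt, t, ht, ?_⟩
      rw [addEdge, sup_adj] at hadj
      rcases hadj with h | h
      · exact h
      · exfalso
        rw [fromEdgeSet_adj, Set.mem_singleton_iff, he, Sym2.eq_iff] at h
        rcases h.1 with ⟨rfl, rfl⟩ | ⟨rfl, rfl⟩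
        · exact hnotopv ht
        · exact hnotopu ht
    · rintro ⟨hwt, t, ht, hadj⟩
      exact ⟨hwt, t, ht, by rw [addEdge, sup_adj]; exact Or.inl hadj⟩
  refine ⟨?_, htop, hmid⟩
  ext w
  simp only [botVertSet, Set.mem_setOf_eq, htop, hmid]
end

section
/- Let G be a 3-colorable good graph with a fixed vertex v0, and let G' = G ∪ {e} for some non-edge e of G, where G' is 3-colorable. If there exists a vertex x with x ∈ B_G and x ∈ T_{G'}, then there exists a middle-component C of G' (a connected component of the subgraph of G' induced on M_{G'}) such that x has at least 2 neighbors in C in the graph G'. -/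
open SimpleGraph

lemma auxWalk15 {V : Type*} {G : SimpleGraph V} {v0 : V} :
    ∀ {m t : V} (q : G.Walk m t), m ∈ midSet G v0 →
      (∀ z ∈ q.support, z ∈ midSet G v0 ∨ z ∈ botVertSet G v0) → t ∈ botVertSet G v0 →
      ∃ t' ∈ q.support, t' ∈ botVertSet G v0 ∧
        ∃ m' ∈ midSet G v0, G.Adj t' m' ∧ midReach G v0 m m' := by
  intro m t q
  induction q with
  | nil => intro hm _ ht; exact absurd hm ht.2
  | @cons u b w h q ih =>
    intro hm hsup ht
    rcases hsup b (by simp) with hb | hb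
    · obtain ⟨t', ht', ht'B, m', hm', hadj, p, hp⟩ :=
        ih hb (fun z hz => hsup z (by simp [hz])) ht
      refine ⟨t', by simp [ht'], ht'B, m', hm', hadj, Walk.cons h p, ?_⟩
      intro z hz
      simp only [Walk.support_cons, List.mem_cons] at hz
      rcases hz with rfl | hz
      · exact hm
      · exact hp z hz
    · exact ⟨b, by simp, hb, u, hm, h.symm, Walk.nil, by simpa using hm⟩

lemma transferWalk15 {V : Type*} {G : SimpleGraph V} {e : Sym2 V} {A : Set V}
    (hA : ∀ a b : V, (addEdge G e).Adj a b → a ∈ A → b ∈ A → G.Adj a b) :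
    ∀ {m y : V} (W : (addEdge G e).Walk m y), (∀ z ∈ W.support, z ∈ A) →
      ∃ W' : G.Walk m y, ∀ z ∈ W'.support, z ∈ A := by
  intro m y W
  induction W with
  | nil => intro h; exact ⟨Walk.nil, by simpa using h⟩
  | @cons u b w h W ih =>
    intro hs
    obtain ⟨W', hW'⟩ := ih (fun z hz => hs z (by simp [hz]))
    refine ⟨Walk.cons (hA u b h (hs u (by simp)) (hs b (by simp))) W', ?_⟩
    intro z hz
    simp only [Walk.support_cons, List.mem_cons] at hz
    rcases hz with rfl | hz
    · exact hs z (by simp)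
    · exact hW' z hz


/-- If `G` is a good 3-colorable graph, `G' = G ∪ {e}` is 3-colorable for a non-edge `e`
of `G`, and some vertex `x` lies in `B_G` and in `T_{G'}`, then there is a
middle-component `C` of `G'` in which `x` has at least two neighbors (in `G'`): there
are two distinct `G'`-neighbors of `x` lying in `M_{G'}` in the same middle-component. -/
theorem statement_15 {V : Type*} (G : SimpleGraph V) (v0 : V)
    (hcol : G.Colorable 3) (hgood : goodGraph G v0)
    (e : Sym2 V) (hd : ¬ e.IsDiag) (hne : e ∉ G.edgeSet)
    (hcol' : (addEdge G e).Colorable 3)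
    (x : V) (hxB : x ∈ botVertSet G v0) (hxT : x ∈ topSet (addEdge G e) v0) :
    ∃ m₁ m₂ : V, m₁ ≠ m₂ ∧
      m₁ ∈ midSet (addEdge G e) v0 ∧ m₂ ∈ midSet (addEdge G e) v0 ∧
      (addEdge G e).Adj x m₁ ∧ (addEdge G e).Adj x m₂ ∧
      midReach (addEdge G e) v0 m₁ m₂ := by
  classical
  by_contra hcon
  push_neg at hcon
  obtain ⟨c'⟩ := hcol'
  set G' : SimpleGraph V := addEdge G e with hG'def
  set a : Fin 3 := c' v0 with hadef
  have fin1 : ∀ t : Fin 3, t + 1 ≠ t := by decide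
  have fin2 : ∀ t : Fin 3, t + 1 ≠ t + 2 := by decide
  have fin5 : ∀ t : Fin 3, t + 2 ≠ t := by decide
  have fin4 : ∀ t p q : Fin 3, p ≠ t → q ≠ t → p ≠ q →
      (if p = t + 1 then t + 2 else t + 1) ≠ (if q = t + 1 then t + 2 else t + 1) := by decide
  have hadj_iff : ∀ p q : V, G'.Adj p q ↔ G.Adj p q ∨ (s(p, q) = e ∧ p ≠ q) := by
    intro p q
    simp [hG'def, addEdge, SimpleGraph.fromEdgeSet_adj, Set.mem_singleton_iff]
  have hGle : ∀ {p q : V}, G.Adj p q → G'.Adj p q := fun h => (hadj_iff _ _).mpr (Or.inl h)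
  have htopc : ∀ t ∈ topSet G' v0, c' t = a := fun t ht => ht c'
  have hTT' : topSet G v0 ⊆ topSet G' v0 := by
    intro z hz c
    exact hz (SimpleGraph.Coloring.mk c (fun h => c.valid (hGle h)))
  have hv0T : v0 ∈ topSet G v0 := fun c => rfl
  have hxne_v0 : x ≠ v0 := fun h => hxB.1 (h ▸ hv0T)
  have hB'B : botVertSet G' v0 ⊆ botVertSet G v0 := by
    intro z hz
    refine ⟨fun h => hz.1 (hTT' h), fun h => hz.2 ⟨hz.1, ?_⟩⟩
    obtain ⟨t, ht, hadj⟩ := h.2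
    exact ⟨t, hTT' ht, hGle hadj⟩
  have hM'MB : ∀ z ∈ midSet G' v0, z ∈ midSet G v0 ∨ z ∈ botVertSet G v0 := by
    intro z hz
    by_cases h : z ∈ midSet G v0
    · exact Or.inl h
    · exact Or.inr ⟨fun h' => hz.1 (hTT' h'), h⟩
  have hadjx : ∀ w, G'.Adj x w → w ∈ midSet G' v0 := by
    intro w h
    refine ⟨fun hw => ?_, x, hxT, h.symm⟩
    exact c'.valid h (by rw [htopc x hxT, htopc w hw])
  have hmid_ne_a : ∀ m ∈ midSet G' v0, c' m ≠ a := by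
    intro m hm
    obtain ⟨_, t, ht, hadj⟩ := hm
    rw [← htopc t ht]
    exact c'.valid hadj
  set S : Set V := {z | ∃ m, G'.Adj x m ∧ c' m = a + 1 ∧ midReach G' v0 m z} with hSdef
  set R : Set V := {z | z ∈ botVertSet G' v0 ∧ ∃ y ∈ S, G'.Adj z y} with hRdef
  have hS_sub : S ⊆ midSet G' v0 := by
    rintro z ⟨m, _, _, p, hp⟩
    exact hp z p.end_mem_support
  have hS_closed : ∀ z ∈ S, ∀ w ∈ midSet G' v0, G'.Adj z w → w ∈ S := by
    rintro z ⟨m, h1, h2, p, hp⟩ w hw hzw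
    refine ⟨m, h1, h2, p.concat hzw, ?_⟩
    intro u hu
    rw [SimpleGraph.Walk.support_concat, List.mem_append] at hu
    rcases hu with hu | hu
    · exact hp u hu
    · simp only [List.mem_singleton] at hu; exact hu ▸ hw
  have hnbrS : ∀ w, G'.Adj x w → w ∈ S → c' w = a + 1 := by
    rintro w hxw ⟨m, hxm, hcm, hmr⟩
    rcases eq_or_ne m w with rfl | hmw
    · exact hcm
    · obtain ⟨p, hp⟩ := hmr
      exact absurd ⟨p, hp⟩ (hcon m w hmw (hp m p.start_mem_support) (hadjx w hxw) hxm hxw)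
  have lemM : ∀ z w, z ∈ botVertSet G' v0 → w ∈ botVertSet G' v0 → s(z, w) = e →
      ∀ y ∈ S, ¬ G'.Adj z y := by
    rintro z w hz hw hzw y ⟨m, hxm, hcm, W, hWsup⟩ hadj
    have hyM' : y ∈ midSet G' v0 := hWsup y W.end_mem_support
    have hmM' : m ∈ midSet G' v0 := hWsup m W.start_mem_support
    have hzyG : G.Adj z y := by
      rcases (hadj_iff z y).mp hadj with h | ⟨h, _⟩
      · exact h
      · rw [← hzw] at h
        have : y = w := Sym2.congr_right.mp h
        exact absurd hyM' (this ▸ hw.2)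
    have hxmG : G.Adj x m := by
      rcases (hadj_iff x m).mp hxm with h | ⟨h, _⟩
      · exact h
      · rw [← hzw, Sym2.eq_iff] at h
        rcases h with ⟨rfl, _⟩ | ⟨rfl, _⟩
        · exact absurd hxT hz.1
        · exact absurd hxT hw.1
    have hA : ∀ p q : V, G'.Adj p q → p ∈ midSet G' v0 → q ∈ midSet G' v0 → G.Adj p q := by
      intro p q hpq hp hq
      rcases (hadj_iff p q).mp hpq with h | ⟨h, _⟩
      · exact h
      · rw [← hzw, Sym2.eq_iff] at h
        rcases h with ⟨rfl, _⟩ | ⟨rfl, _⟩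
        · exact absurd hp hz.2
        · exact absurd hp hw.2
    obtain ⟨W', hW'⟩ := transferWalk15 hA W hWsup
    have hmM : m ∈ midSet G v0 := by
      rcases hM'MB m hmM' with h | h
      · exact h
      · exact absurd hxmG (hgood.1 x hxB m h)
    obtain ⟨t', ht'supp, ht'B, m', hm'M, hadj', hmr⟩ :=
      auxWalk15 (W'.concat hzyG.symm) hmM (by
        intro u hu
        rw [SimpleGraph.Walk.support_concat, List.mem_append] at hu
        rcases hu with hu | hu
        · exact hM'MB u (hW' u hu)
        · simp only [List.mem_singleton] at hu
          exact Or.inr (hu ▸ hB'B hz)) (hB'B hz)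
    have hxeq : x = t' := hgood.2 x t' m m' hxB ht'B hmM hm'M hxmG hadj' hmr
    rw [SimpleGraph.Walk.support_concat, List.mem_append] at ht'supp
    rcases ht'supp with hu | hu
    · exact (hW' t' hu).1 (hxeq ▸ hxT)
    · simp only [List.mem_singleton] at hu
      exact (hu ▸ hz).1 (hxeq ▸ hxT)
  set c'' : V → Fin 3 := fun z =>
    if z = x then a + 1 else if z ∈ R then a
    else if z ∈ S then (if c' z = a + 1 then a + 2 else a + 1) else c' z with hc''def
  have hMnotR : ∀ z ∈ midSet G' v0, z ∉ R := fun z hz hr => hr.1.2 hz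
  have hMnotx : ∀ z ∈ midSet G' v0, z ≠ x := fun z hz h => hz.1 (h ▸ hxT)
  have hcM : ∀ z ∈ midSet G' v0, c'' z ≠ a := by
    intro z hz
    rw [hc''def]
    simp only [if_neg (hMnotx z hz), if_neg (hMnotR z hz)]
    by_cases hzS : z ∈ S
    · rw [if_pos hzS]
      by_cases h1 : c' z = a + 1 <;> simp [h1, fin5, fin1]
    · rw [if_neg hzS]; exact hmid_ne_a z hz
  have hcT : ∀ z ∈ topSet G' v0, z ≠ x → c'' z = a := by
    intro z hz hzx
    rw [hc''def]
    simp only [if_neg hzx, if_neg (fun h : z ∈ R => h.1.1 hz),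
      if_neg (fun h : z ∈ S => (hS_sub h).1 hz)]
    exact htopc z hz
  have keyx : ∀ w, G'.Adj x w → c'' w ≠ a + 1 := by
    intro w hxw
    have hwM : w ∈ midSet G' v0 := hadjx w hxw
    rw [hc''def]
    simp only [if_neg (hMnotx w hwM), if_neg (hMnotR w hwM)]
    by_cases hwS : w ∈ S
    · rw [if_pos hwS, if_pos (hnbrS w hxw hwS)]
      exact fun h => fin2 a h.symm
    · rw [if_neg hwS]
      intro h
      exact hwS ⟨w, hxw, h, SimpleGraph.Walk.nil, by simpa using hwM⟩
  have key : ∀ z w, G'.Adj z w → c'' z ≠ c'' w := by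
    have keyMB : ∀ z w, G'.Adj z w → z ∈ midSet G' v0 → w ∈ botVertSet G' v0 →
        c'' z ≠ c'' w := by
      intro z w hzw hz hw
      have hwx : w ≠ x := fun h => hw.1 (h ▸ hxT)
      by_cases hwR : w ∈ R
      · rw [show c'' w = a by rw [hc''def]; simp only [if_neg hwx, if_pos hwR]]
        exact hcM z hz
      · have hzS : z ∉ S := fun h => hwR ⟨hw, z, h, hzw.symm⟩
        rw [hc''def]
        simp only [if_neg (hMnotx z hz), if_neg (hMnotR z hz), if_neg hzS, if_neg hwx,
          if_neg hwR, if_neg (fun h : w ∈ S => hw.2 (hS_sub h))]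
        exact c'.valid hzw
    intro z w hzw
    by_cases hzx : z = x
    · subst hzx
      rw [show c'' z = a + 1 by rw [hc''def]; simp]
      exact fun h => keyx w hzw h.symm
    by_cases hwx : w = x
    · subst hwx
      rw [show c'' w = a + 1 by rw [hc''def]; simp]
      exact keyx z hzw.symm
    by_cases hzT : z ∈ topSet G' v0
    · by_cases hwT : w ∈ topSet G' v0
      · exact absurd (by rw [htopc z hzT, htopc w hwT]) (c'.valid hzw)
      by_cases hwM : w ∈ midSet G' v0
      · rw [hcT z hzT hzx]; exact fun h => hcM w hwM h.symm
      · exact absurd ⟨hwT, z, hzT, hzw.symm⟩ hwM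
    by_cases hzM : z ∈ midSet G' v0
    · by_cases hwT : w ∈ topSet G' v0
      · rw [hcT w hwT hwx]; exact hcM z hzM
      by_cases hwM : w ∈ midSet G' v0
      · by_cases hzS : z ∈ S
        · have hwS : w ∈ S := hS_closed z hzS w hwM hzw
          rw [hc''def]
          simp only [if_neg hzx, if_neg hwx, if_neg (hMnotR z hzM), if_neg (hMnotR w hwM),
            if_pos hzS, if_pos hwS]
          exact fin4 a (c' z) (c' w) (hmid_ne_a z hzM) (hmid_ne_a w hwM) (c'.valid hzw)
        · by_cases hwS : w ∈ S
          · exact absurd (hS_closed w hwS z hzM hzw.symm) hzS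
          · rw [hc''def]
            simp only [if_neg hzx, if_neg hwx, if_neg (hMnotR z hzM), if_neg (hMnotR w hwM),
              if_neg hzS, if_neg hwS]
            exact c'.valid hzw
      · exact keyMB z w hzw hzM ⟨hwT, hwM⟩
    · have hzB : z ∈ botVertSet G' v0 := ⟨hzT, hzM⟩
      by_cases hwT : w ∈ topSet G' v0
      · exact absurd ⟨hzT, w, hwT, hzw⟩ hzM
      by_cases hwM : w ∈ midSet G' v0
      · exact fun h => keyMB w z hzw.symm hwM hzB h.symm
      · have hwB : w ∈ botVertSet G' v0 := ⟨hwT, hwM⟩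
        have hse : s(z, w) = e := by
          rcases (hadj_iff z w).mp hzw with h | ⟨h, _⟩
          · exact absurd h (hgood.1 z (hB'B hzB) w (hB'B hwB))
          · exact h
        have hzR : z ∉ R := by
          rintro ⟨_, y, hy, hadj⟩
          exact lemM z w hzB hwB hse y hy hadj
        have hwR : w ∉ R := by
          rintro ⟨_, y, hy, hadj⟩
          exact lemM w z hwB hzB (by rw [Sym2.eq_swap]; exact hse) y hy hadj
        rw [hc''def]
        simp only [if_neg hzx, if_neg hwx, if_neg hzR, if_neg hwR,
          if_neg (fun h : z ∈ S => hzM (hS_sub h)), if_neg (fun h : w ∈ S => hwM (hS_sub h))]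
        exact c'.valid hzw
  have hcolor := hxT (SimpleGraph.Coloring.mk c'' (fun {z w} h => key z w h))
  have hx : c'' x = a + 1 := by rw [hc''def]; simp
  have hv0 : c'' v0 = a := hcT v0 (hTT' hv0T) (Ne.symm hxne_v0)
  have : c'' x = c'' v0 := hcolor
  rw [hx, hv0] at this
  exact fin1 a this
end
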